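/- Let ξ ∈ ℝ, let n be a positive integer, let δ > 0, and let c₇ > 0. Then there exists a constant c₆ > 0 (depending only on ξ, n, δ, c₇) with the following property: for every polynomial P ∈ ℤ[T] that is either of degree n, or monic of degree n+1, if at least n of the complex roots α of P, counted with multiplicity, satisfy |ξ − α| ≤ c₇ H(P)^{-δ}, then |P^{[k]}(ξ)| ≤ c₆ H(P)^{1−(n−k)δ} for all 0 ≤ k ≤ n. -/

import Mathlib

open Polynomial
open scoped NNReal

/-- The height of an integer polynomial: the largest absolute value of its coefficients. -/
noncomputable def intPolyHeight (P : Polynomial ℤ) : ℝ :=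
  ((P.support.sup fun k => (P.coeff k).natAbs : ℕ) : ℝ)

/-- The `k`-th divided derivative of a real polynomial at `ξ`, i.e. the coefficient of
`(T - ξ)^k` in the Taylor expansion of `P` at `ξ`. -/
noncomputable def divDeriv (ξ : ℝ) (P : Polynomial ℝ) (k : ℕ) : ℝ :=
  (Polynomial.taylor ξ P).coeff k

/-- The `k`-th divided derivative at `ξ` of an integer polynomial, viewed over `ℝ`. -/
noncomputable def divDerivZ (ξ : ℝ) (P : Polynomial ℤ) (k : ℕ) : ℝ :=
  divDeriv ξ (P.map (Int.castRingHom ℝ)) k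

/-- The multiset of complex roots of an integer polynomial (the conjugates of `α`, when `P`
is the irreducible polynomial of `α`). -/
noncomputable def conjRoots (P : Polynomial ℤ) : Multiset ℂ :=
  (P.map (Int.castRingHom ℂ)).roots

/-- `q ≥ 1` is the denominator of a convergent of the continued fraction expansion of `ξ`. -/
def IsConvergentDenom (ξ : ℝ) (q : ℕ) : Prop :=
  1 ≤ q ∧ ∃ i : ℕ, (GenContFract.of ξ).dens i = (q : ℝ)

lemma height_nonneg (P : Polynomial ℤ) : 0 ≤ intPolyHeight P := Nat.cast_nonneg _

lemma natAbs_coeff_le_height (P : Polynomial ℤ) (i : ℕ) :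
    (((P.coeff i).natAbs : ℕ) : ℝ) ≤ intPolyHeight P := by
  by_cases h : P.coeff i = 0
  · simp [h, height_nonneg]
  · exact_mod_cast Nat.cast_le.mpr
      (Finset.le_sup (f := fun k => (P.coeff k).natAbs) (Polynomial.mem_support_iff.mpr h))

lemma abs_coeff_le_height (P : Polynomial ℤ) (i : ℕ) :
    |((P.coeff i : ℝ))| ≤ intPolyHeight P := by
  have := natAbs_coeff_le_height P i
  rwa [Nat.cast_natAbs, Int.cast_abs] at this

lemma one_le_height {P : Polynomial ℤ} (hP : P ≠ 0) : 1 ≤ intPolyHeight P := by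
  have h : P.coeff P.natDegree ≠ 0 := Polynomial.leadingCoeff_ne_zero.mpr hP
  have h1 : 1 ≤ (P.coeff P.natDegree).natAbs := Nat.one_le_iff_ne_zero.mpr (by simpa using h)
  calc (1:ℝ) ≤ ((P.coeff P.natDegree).natAbs : ℝ) := by exact_mod_cast h1
    _ ≤ _ := natAbs_coeff_le_height P _

lemma taylor_map' {R S : Type*} [CommRing R] [CommRing S] (f : R →+* S) (r : R) (p : R[X]) :
    (Polynomial.taylor r p).map f = Polynomial.taylor (f r) (p.map f) := by
  simp [Polynomial.taylor_apply, Polynomial.map_comp]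

lemma abs_prod_le {r : ℝ} (hr : 0 ≤ r) (u : Multiset ℂ)
    (h : ∀ z ∈ u, ‖z‖ ≤ r) :
    ‖u.prod‖ ≤ r ^ Multiset.card u := by
  induction u using Multiset.induction_on with
  | empty => simp
  | cons a s ih =>
    simp only [Multiset.prod_cons, norm_mul, Multiset.card_cons, pow_succ']
    exact mul_le_mul (h a (Multiset.mem_cons_self _ _))
      (ih fun z hz => h z (Multiset.mem_cons_of_mem hz)) (norm_nonneg _) hr

lemma coeff_prod_X_sub_C_le {r : ℝ} (hr : 0 ≤ r) (s : Multiset ℂ)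
    (h : ∀ z ∈ s, ‖z‖ ≤ r) {k : ℕ} (hk : k ≤ Multiset.card s) :
    ‖(s.map fun z => X - C z).prod.coeff k‖
      ≤ ((Multiset.card s).choose (Multiset.card s - k)) * r ^ (Multiset.card s - k) := by
  rw [Multiset.prod_X_sub_C_coeff s hk]
  set m := Multiset.card s - k with hm
  have h1 : ‖(-1) ^ m * Multiset.esymm s m‖ = ‖Multiset.esymm s m‖ := by
    simp
  rw [h1]
  unfold Multiset.esymm
  calc ‖(Multiset.map Multiset.prod (Multiset.powersetCard m s)).sum‖
      ≤ ((Multiset.map Multiset.prod (Multiset.powersetCard m s)).map (fun z => ‖z‖)).sum := by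
        simpa using
          norm_multiset_sum_le (Multiset.map Multiset.prod (Multiset.powersetCard m s))
    _ ≤ (Multiset.card ((Multiset.map Multiset.prod (Multiset.powersetCard m s)).map (fun z => ‖z‖))) • (r ^ m) := by
        apply Multiset.sum_le_card_nsmul
        intro x hx
        simp only [Multiset.mem_map] at hx
        obtain ⟨y, hy, rfl⟩ := hx
        obtain ⟨t, ht, rfl⟩ := hy
        rw [Multiset.mem_powersetCard] at ht
        rw [← ht.2]
        exact abs_prod_le hr t fun z hz => h z (Multiset.mem_of_le ht.1 hz)
    _ = ((Multiset.card s).choose m) * r ^ m := by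
        simp [Multiset.card_powersetCard, nsmul_eq_mul]

lemma choose_le_two_pow' (n m : ℕ) : (n.choose m : ℝ) ≤ 2 ^ n := by
  have : n.choose m ≤ 2 ^ n := by
    rcases le_or_gt m n with h | h
    · calc n.choose m ≤ ∑ i ∈ Finset.range (n+1), n.choose i :=
          Finset.single_le_sum (fun i _ => Nat.zero_le _) (Finset.mem_range.mpr (by omega))
        _ = 2 ^ n := Nat.sum_range_choose n
    · simp [Nat.choose_eq_zero_of_lt h]
  exact_mod_cast this

set_option maxHeartbeats 1000000 in
/-- Proposition 3, (ii) ⟹ (i): if at least `n` of the roots of `P` (with multiplicity) are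
close to `ξ`, then every divided derivative of `P` at `ξ` is small. -/
theorem close_roots_implies_small_divided_derivs
    (ξ : ℝ) (n : ℕ) (hn : 0 < n) (δ : ℝ) (hδ : 0 < δ) (c₇ : ℝ) (hc₇ : 0 < c₇) :
    ∃ c₆ : ℝ, 0 < c₆ ∧
      ∀ P : Polynomial ℤ,
        (P.natDegree = n ∨ (P.Monic ∧ P.natDegree = n + 1)) →
        (∃ S : Multiset ℂ, S ≤ conjRoots P ∧ Multiset.card S = n ∧
          ∀ z ∈ S, ‖(ξ : ℂ) - z‖ ≤ c₇ * intPolyHeight P ^ (-δ)) →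
        ∀ k ≤ n, |divDerivZ ξ P k| ≤ c₆ * intPolyHeight P ^ (1 - ((n : ℝ) - k) * δ) := by
  set M : ℝ := max c₇ 1 with hMdef
  have hM1 : (1:ℝ) ≤ M := le_max_right _ _
  have hM0 : (0:ℝ) < M := lt_of_lt_of_le one_pos hM1
  set K : ℝ := |ξ| + 2 with hKdef
  have hK1 : (1:ℝ) ≤ K := by rw [hKdef]; have := abs_nonneg ξ; linarith
  refine ⟨K * 2 ^ (n + 1) * M ^ (n + 1), by positivity, ?_⟩
  rintro P hdeg ⟨S, hS, hScard, hSclose⟩ k hk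
  have hP0 : P ≠ 0 := by
    rcases hdeg with h | h
    · intro h0; rw [h0] at h; simp at h; omega
    · exact h.1.ne_zero
  set H := intPolyHeight P with hHdef
  have hH1 : 1 ≤ H := one_le_height hP0
  have hHpos : 0 < H := lt_of_lt_of_le one_pos hH1
  set r : ℝ := c₇ * H ^ (-δ) with hrdef
  have hrpos : 0 < r := mul_pos hc₇ (Real.rpow_pos_of_pos hHpos _)
  have hrM : r ≤ M := by
    calc r ≤ c₇ * 1 := by
          exact mul_le_mul_of_nonneg_left
            (Real.rpow_le_one_of_one_le_of_nonpos hH1 (by linarith)) hc₇.le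
      _ = c₇ := mul_one _
      _ ≤ M := le_max_left _ _
  set Q : Polynomial ℂ := P.map (Int.castRingHom ℂ) with hQdef
  have hinj : Function.Injective (Int.castRingHom ℂ) := fun a b => by simp
  have hQ0 : Q ≠ 0 := by
    rw [hQdef, Ne, Polynomial.map_eq_zero_iff hinj]; exact hP0
  have hQdeg : Q.natDegree = P.natDegree :=
    Polynomial.natDegree_map_eq_of_injective hinj P
  have hsplits : Q.Splits := IsAlgClosed.splits Q
  have hcard : Multiset.card Q.roots = Q.natDegree := by
    have := hsplits.natDegree_eq_card_roots
    simpa using this.symm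
  set ξ' : ℂ := (ξ : ℂ) with hξ'
  -- bridge to ℂ
  have hbridge : |divDerivZ ξ P k| = ‖(Polynomial.taylor ξ' Q).coeff k‖ := by
    have h1 : (P.map (Int.castRingHom ℝ)).map Complex.ofRealHom = Q := by
      rw [hQdef, Polynomial.map_map]
      congr 1
    have h2 : ((Polynomial.taylor ξ (P.map (Int.castRingHom ℝ))).map Complex.ofRealHom).coeff k
        = (Polynomial.taylor ξ' Q).coeff k := by
      rw [taylor_map', h1]; rfl
    rw [divDerivZ, divDeriv, ← h2, Polynomial.coeff_map]
    rw [Complex.ofRealHom_eq_coe, Complex.norm_real, Real.norm_eq_abs]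
  set F : Multiset ℂ := Q.roots - S with hFdef
  have hSF : S + F = Q.roots := by
    rw [hFdef, add_comm]
    exact tsub_add_cancel_of_le hS
  set A : Polynomial ℂ := ((S.map fun α => α - ξ').map fun z => X - C z).prod with hAdef
  have hcompmap : ∀ (T : Multiset ℂ),
      ((T.map fun a => (X:ℂ[X]) - C a).map (fun p => p.comp (X + C ξ'))).prod
        = ((T.map fun α => α - ξ').map fun z => X - C z).prod := by
    intro T
    rw [Multiset.map_map, Multiset.map_map]
    congr 1
    apply Multiset.map_congr rfl
    intro x _
    simp only [Function.comp_apply, Polynomial.sub_comp, Polynomial.X_comp, Polynomial.C_comp]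
    rw [Polynomial.C_sub]; ring
  have htaylor : Polynomial.taylor ξ' Q
      = C Q.leadingCoeff * A * ((F.map fun α => α - ξ').map fun z => X - C z).prod := by
    have hfact := hsplits.eq_prod_roots
    conv_lhs => rw [hfact]
    rw [Polynomial.taylor_apply, Polynomial.mul_comp, Polynomial.C_comp,
      Polynomial.multiset_prod_comp, ← hSF, Multiset.map_add, Multiset.map_add,
      Multiset.prod_add, hcompmap S, hcompmap F, hAdef, mul_assoc]
  -- bound on coefficients of A
  have hcardS : Multiset.card (S.map fun α => α - ξ') = n := by
    rw [Multiset.card_map, hScard]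
  have hAbound : ∀ j ≤ n, ‖A.coeff j‖ ≤ (n.choose (n - j)) * r ^ (n - j) := by
    intro j hj
    have := coeff_prod_X_sub_C_le hrpos.le (S.map fun α => α - ξ')
      (by
        intro z hz
        simp only [Multiset.mem_map] at hz
        obtain ⟨α, hα, rfl⟩ := hz
        rw [norm_sub_rev]
        exact hSclose α hα)
      (k := j) (by rw [hcardS]; exact hj)
    rwa [hcardS] at this
  -- power computations
  have hrpow : ∀ m : ℕ, r ^ m = c₇ ^ m * H ^ (-(m:ℝ) * δ) := by
    intro m
    rw [hrdef, mul_pow, ← Real.rpow_natCast (H ^ (-δ)) m, ← Real.rpow_mul hHpos.le]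
    ring_nf
  set m : ℕ := n - k with hmdef
  have hmcast : (m:ℝ) = (n:ℝ) - (k:ℝ) := by
    rw [hmdef]; push_cast [Nat.cast_sub hk]; ring
  have hHe : H * H ^ (-(m:ℝ)*δ) = H ^ (1 - ((n:ℝ) - k)*δ) := by
    rw [← hmcast]
    have he : (1 - (m:ℝ)*δ) = 1 + (-(m:ℝ)*δ) := by ring
    rw [he, Real.rpow_add hHpos, Real.rpow_one]
  have hHenonneg : 0 ≤ H ^ (1 - ((n:ℝ) - k)*δ) := (Real.rpow_pos_of_pos hHpos _).le
  have hc7M : ∀ i : ℕ, i ≤ n + 1 → c₇ ^ i ≤ M ^ (n+1) :=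
    fun i hi => le_trans (pow_le_pow_left₀ hc₇.le (le_max_left _ _) i)
      (pow_le_pow_right₀ hM1 hi)
  have hch : ∀ i : ℕ, (n.choose i : ℝ) ≤ 2 ^ (n+1) :=
    fun i => le_trans (choose_le_two_pow' n i) (by
      have : (2:ℝ) ^ n ≤ 2 ^ (n+1) := pow_le_pow_right₀ one_le_two (Nat.le_succ n)
      linarith)
  rw [hbridge]
  rcases hdeg with hdn | ⟨hmon, hdn⟩
  · -- degree n case
    have hFzero : F = 0 := by
      have hc : Multiset.card S + Multiset.card F = n := by
        rw [← Multiset.card_add, hSF, hcard, hQdeg, hdn]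
      exact Multiset.card_eq_zero.mp (by omega)
    have htay1 : (Polynomial.taylor ξ' Q).coeff k = Q.leadingCoeff * A.coeff k := by
      rw [htaylor, hFzero]
      simp
    have habsa : ‖Q.leadingCoeff‖ ≤ H := by
      rw [Polynomial.leadingCoeff, hQdef, Polynomial.coeff_map, eq_intCast,
        Complex.norm_intCast]
      exact abs_coeff_le_height P _
    calc ‖(Polynomial.taylor ξ' Q).coeff k‖
        = ‖Q.leadingCoeff‖ * ‖A.coeff k‖ := by rw [htay1, norm_mul]
      _ ≤ H * ((n.choose m) * r ^ m) :=
          mul_le_mul habsa (hAbound k hk) (norm_nonneg _) (height_nonneg P)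
      _ = (n.choose m : ℝ) * c₇ ^ m * (H * H ^ (-(m:ℝ)*δ)) := by rw [hrpow m]; ring
      _ = (n.choose m : ℝ) * c₇ ^ m * H ^ (1 - ((n:ℝ) - k)*δ) := by rw [hHe]
      _ ≤ K * 2 ^ (n+1) * M ^ (n+1) * H ^ (1 - ((n:ℝ) - k)*δ) := by
          apply mul_le_mul_of_nonneg_right _ hHenonneg
          calc (n.choose m:ℝ) * c₇ ^ m ≤ 2 ^ (n+1) * M ^ (n+1) :=
              mul_le_mul (hch m) (hc7M m (by omega)) (by positivity) (by positivity)
            _ ≤ K * (2 ^ (n+1) * M ^ (n+1)) := le_mul_of_one_le_left (by positivity) hK1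
            _ = K * 2 ^ (n+1) * M ^ (n+1) := by ring
  · -- monic, degree n + 1 case
    have hQm : Q.Monic := hmon.map _
    have hlead : Q.leadingCoeff = 1 := hQm.leadingCoeff
    have hcF : Multiset.card F = 1 := by
      have hc : Multiset.card S + Multiset.card F = n + 1 := by
        rw [← Multiset.card_add, hSF, hcard, hQdeg, hdn]
      omega
    obtain ⟨γ, hγ⟩ := Multiset.card_eq_one.mp hcF
    have hγroot : γ ∈ Q.roots := by
      rw [← hSF]
      exact Multiset.mem_add.mpr (Or.inr (by rw [hγ]; exact Multiset.mem_singleton_self γ))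
    set N : ℕ := P.support.sup fun k => (P.coeff k).natAbs with hNdef
    have hN : H = (N : ℝ) := rfl
    have habsγ : ‖γ‖ ≤ H + 1 := by
      have hroot : Q.IsRoot γ := (Polynomial.mem_roots'.mp hγroot).2
      have hlt := Polynomial.IsRoot.norm_lt_cauchyBound hQ0 hroot
      have hsup : (Finset.range Q.natDegree).sup (fun i => ‖Q.coeff i‖₊) ≤ (N : ℝ≥0) := by
        apply Finset.sup_le
        intro i _
        rw [← NNReal.coe_le_coe, coe_nnnorm]
        have hQc : Q.coeff i = ((P.coeff i : ℤ) : ℂ) := by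
          rw [hQdef, Polynomial.coeff_map, eq_intCast]
        rw [hQc, Complex.norm_intCast]
        calc |((P.coeff i : ℤ) : ℝ)| ≤ H := abs_coeff_le_height P i
          _ = ((N : ℝ≥0) : ℝ) := by rw [hN]; simp
      have hcb : Polynomial.cauchyBound Q ≤ (N : ℝ≥0) + 1 := by
        unfold Polynomial.cauchyBound
        rw [hlead, nnnorm_one, div_one]
        exact add_le_add_left hsup 1
      have hle : ‖γ‖₊ ≤ (N : ℝ≥0) + 1 := le_trans hlt.le hcb
      have h2 : (‖γ‖₊ : ℝ) ≤ ((N : ℝ≥0) : ℝ) + 1 := by exact_mod_cast hle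
      rw [← coe_nnnorm, hN]
      simpa using h2
    set c : ℂ := γ - ξ' with hcdef
    have habsc : ‖c‖ ≤ K * H := by
      have h3 : ‖c‖ ≤ ‖γ‖ + ‖ξ'‖ := by
        rw [hcdef]
        simpa using norm_sub_le γ ξ'
      have h4 : ‖ξ'‖ = |ξ| := by rw [hξ', Complex.norm_real, Real.norm_eq_abs]
      rw [hKdef]
      nlinarith [abs_nonneg ξ, hH1, habsγ]
    have hBprod : ((({γ} : Multiset ℂ).map fun α => α - ξ').map fun z => X - C z).prod
        = X - C c := by simp [hcdef]
    have htay2 : (Polynomial.taylor ξ' Q).coeff k = (A * (X - C c)).coeff k := by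
      rw [htaylor, hlead, Polynomial.C_1, one_mul, hγ, hBprod]
    have hkey : ‖(A * (X - C c)).coeff k‖
        ≤ (n.choose (m+1)) * r ^ (m+1) + ‖c‖ * ‖A.coeff k‖ := by
      rcases k with _ | j
      · rw [Polynomial.mul_coeff_zero]
        have h5 : (X - C c).coeff 0 = -c := by simp
        rw [h5, norm_mul]
        have h6 : ‖-c‖ = ‖c‖ := by simp
        rw [h6, mul_comm]
        exact le_add_of_nonneg_left (by positivity)
      · rw [Polynomial.coeff_mul_X_sub_C]
        have h7 : ‖A.coeff j - A.coeff (j+1) * c‖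
            ≤ ‖A.coeff j‖ + ‖c‖ * ‖A.coeff (j+1)‖ := by
          have := norm_sub_le (A.coeff j) (A.coeff (j+1) * c)
          simpa [norm_mul, mul_comm] using this
        refine h7.trans (add_le_add_left ?_ _)
        have hj : j ≤ n := by omega
        have h8 := hAbound j hj
        have h9 : n - j = m + 1 := by omega
        rwa [h9] at h8
    rw [htay2]
    have hexp : (-(((m+1:ℕ)):ℝ) * δ) ≤ 1 - ((n:ℝ) - k) * δ := by
      rw [← hmcast]
      push_cast
      nlinarith [hδ, Nat.cast_nonneg (α := ℝ) m]
    have hT1 : (n.choose (m+1) : ℝ) * r ^ (m+1)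
        ≤ 2 ^ n * M ^ (n+1) * H ^ (1 - ((n:ℝ) - k) * δ) := by
      rw [hrpow (m+1)]
      have h1 := choose_le_two_pow' n (m+1)
      have h2 := hc7M (m+1) (by omega)
      have h3 : H ^ (-(((m+1:ℕ)):ℝ) * δ) ≤ H ^ (1 - ((n:ℝ) - k) * δ) :=
        Real.rpow_le_rpow_of_exponent_le hH1 hexp
      calc (n.choose (m+1) : ℝ) * (c₇ ^ (m+1) * H ^ (-(((m+1:ℕ)):ℝ) * δ))
          ≤ 2 ^ n * (M ^ (n+1) * H ^ (1 - ((n:ℝ) - k) * δ)) := by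
            refine mul_le_mul h1 (mul_le_mul h2 h3 (Real.rpow_pos_of_pos hHpos _).le
              (by positivity)) (by positivity) (by positivity)
        _ = 2 ^ n * M ^ (n+1) * H ^ (1 - ((n:ℝ) - k) * δ) := by ring
    have hT2 : ‖c‖ * ‖A.coeff k‖
        ≤ K * (2 ^ n * M ^ (n+1)) * H ^ (1 - ((n:ℝ) - k) * δ) := by
      calc ‖c‖ * ‖A.coeff k‖
          ≤ (K * H) * ((n.choose m) * r ^ m) :=
            mul_le_mul habsc (hAbound k hk) (norm_nonneg _) (by positivity)
        _ = K * ((n.choose m : ℝ) * c₇ ^ m) * (H * H ^ (-(m:ℝ)*δ)) := by rw [hrpow m]; ring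
        _ = K * ((n.choose m : ℝ) * c₇ ^ m) * H ^ (1 - ((n:ℝ) - k)*δ) := by rw [hHe]
        _ ≤ K * (2 ^ n * M ^ (n+1)) * H ^ (1 - ((n:ℝ) - k)*δ) := by
            apply mul_le_mul_of_nonneg_right _ hHenonneg
            apply mul_le_mul_of_nonneg_left _ (by positivity)
            exact mul_le_mul (choose_le_two_pow' n m) (hc7M m (by omega))
              (by positivity) (by positivity)
    refine le_trans hkey ?_
    refine le_trans (add_le_add hT1 hT2) ?_
    have hX : (0:ℝ) ≤ 2 ^ n * M ^ (n+1) * H ^ (1 - ((n:ℝ) - k) * δ) := by positivity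
    have h2s : (2:ℝ) ^ (n+1) = 2 * 2 ^ n := by rw [pow_succ]; ring
    rw [h2s]
    nlinarith [hK1, hX]
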